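/- In a ≺-smooth landscape, if i ∈ φ⊖(x) (i is correct at x) then x_i = x*_i, where x* is the optimum. -/

import Mathlib

variable {n : ℕ}

def flipBit (x : Fin n → Bool) (i : Fin n) : Fin n → Bool :=
  Function.update x i (!(x i))

def PrecSmooth (r : Fin n → Fin n → Prop) (f : (Fin n → Bool) → ℤ)
    (xs : Fin n → Bool) : Prop :=
  ∀ (j : Fin n) (x : Fin n → Bool), (∀ i, r i j → x i = xs i) →
    f (Function.update x j (xs j)) > f (Function.update x j (!(xs j)))

/-- `i` is correct at `x` (`i ∈ φ⊖(x)`): every `j ⪯ i` is in the in-map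
`φ⁻(x)`, i.e. flipping `j` does not increase fitness. -/
def Correct (r : Fin n → Fin n → Prop) (f : (Fin n → Bool) → ℤ)
    (x : Fin n → Bool) (i : Fin n) : Prop :=
  ∀ j, (r j i ∨ j = i) → f (flipBit x j) ≤ f x

/-- In a `≺`-smooth landscape, a correct index agrees with the optimum. -/
theorem correct_agrees_with_optimum
    (f : (Fin n → Bool) → ℤ) (r : Fin n → Fin n → Prop)
    (hr : IsStrictOrder (Fin n) r) (xs : Fin n → Bool)
    (hs : PrecSmooth r f xs) (x : Fin n → Bool) (i : Fin n)
    (hi : Correct r f x i) : x i = xs i := by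
  have htr : IsTrans (Fin n) r := hr.toIsTrans
  have hir : IsIrrefl (Fin n) r := hr.toIrrefl
  have wf : WellFounded r := Finite.wellFounded_of_trans_of_irrefl r
  induction i using wf.induction with
  | _ i ih =>
    have hagree : ∀ j, r j i → x j = xs j := by
      intro j hj
      refine ih j hj ?_
      intro k hk
      refine hi k (Or.inl ?_)
      rcases hk with h | h
      · exact htr.trans _ _ _ h hj
      · exact h ▸ hj
    by_contra h
    have hxi : x i = !(xs i) := by
      cases hxs : xs i <;> cases hx : x i <;> simp_all
    have hsm := hs i x hagree
    have hle := hi i (Or.inr rfl)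
    rw [flipBit, hxi] at hle
    simp only [Bool.not_not] at hle
    rw [← hxi, Function.update_eq_self] at hsm
    omega
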